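/- Under the hypotheses of the previous statement, additionally with u = v (synchronous velocity coupling), one has max_{s ≤ t} ‖q(s; x, v) - q(s; y, v) - (x - y)‖ ≤ t²(1 + L) ‖x - y‖ and max_{s ≤ t} ‖q'(s; x, v) - q'(s; y, v)‖ ≤ 2 t (1 + L) ‖x - y‖. -/

import Mathlib

open Set

theorem stmt_12 {H : Type*} [NormedAddCommGroup H] [NormedSpace ℝ H]
    (F : H → H) (L : ℝ) (hL : 0 ≤ L)
    (hF : ∀ a b : H, ‖F a - F b‖ ≤ L * ‖a - b‖)
    (q₁ p₁ q₂ p₂ : ℝ → H) (x y v : H)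
    (hq₁0 : q₁ 0 = x) (hp₁0 : p₁ 0 = v) (hq₂0 : q₂ 0 = y) (hp₂0 : p₂ 0 = v)
    (hq₁' : ∀ s : ℝ, HasDerivAt q₁ (p₁ s) s)
    (hp₁' : ∀ s : ℝ, HasDerivAt p₁ (-(q₁ s) - F (q₁ s)) s)
    (hq₂' : ∀ s : ℝ, HasDerivAt q₂ (p₂ s) s)
    (hp₂' : ∀ s : ℝ, HasDerivAt p₂ (-(q₂ s) - F (q₂ s)) s)
    (t : ℝ) (ht : 0 < t) (htL : t ^ 2 * (1 + L) ≤ 1) :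
    (∀ s ∈ Icc (0:ℝ) t, ‖q₁ s - q₂ s - (x - y)‖ ≤ t ^ 2 * (1 + L) * ‖x - y‖) ∧
    (∀ s ∈ Icc (0:ℝ) t, ‖p₁ s - p₂ s‖ ≤ 2 * t * (1 + L) * ‖x - y‖) := by
  set δq := fun s => q₁ s - q₂ s with hδqdef
  set δp := fun s => p₁ s - p₂ s with hδpdef
  have hδq' : ∀ s, HasDerivAt δq (δp s) s := fun s => (hq₁' s).sub (hq₂' s)
  have hδp' : ∀ s, HasDerivAt δp (-(δq s) - (F (q₁ s) - F (q₂ s))) s := by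
    intro s
    have h := (hp₁' s).sub (hp₂' s)
    convert h using 1
    · rfl
    simp only [hδqdef]
    abel
  have hδq0 : δq 0 = x - y := by simp [hδqdef, hq₁0, hq₂0]
  have hδp0 : δp 0 = 0 := by simp [hδpdef, hp₁0, hp₂0]
  have hbound : ∀ s, ‖-(δq s) - (F (q₁ s) - F (q₂ s))‖ ≤ (1 + L) * ‖δq s‖ := by
    intro s
    calc ‖-(δq s) - (F (q₁ s) - F (q₂ s))‖
        ≤ ‖-(δq s)‖ + ‖F (q₁ s) - F (q₂ s)‖ := norm_sub_le _ _
      _ ≤ ‖δq s‖ + L * ‖q₁ s - q₂ s‖ := by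
          rw [norm_neg]; gcongr; exact hF _ _
      _ = (1 + L) * ‖δq s‖ := by rw [hδqdef]; ring
  -- maximizer of ‖δq‖ on [0,t]
  obtain ⟨s₀, hs₀, hmax⟩ := (isCompact_Icc (a := (0:ℝ)) (b := t)).exists_isMaxOn
    ⟨0, left_mem_Icc.2 ht.le⟩
    (fun s _ => ((hδq' s).continuousAt).continuousWithinAt.norm)
  set A := ‖δq s₀‖ with hAdef
  have hA0 : 0 ≤ A := norm_nonneg _
  have hAle : ∀ s ∈ Icc (0:ℝ) t, ‖δq s‖ ≤ A := fun s hs => hmax hs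
  have h1L : (0:ℝ) ≤ 1 + L := by linarith
  -- bound on δp : ‖δp s‖ ≤ (1+L)*A*s
  have hp_bd : ∀ s ∈ Icc (0:ℝ) t, ‖δp s‖ ≤ (1 + L) * A * s := by
    have hB : ∀ r : ℝ, HasDerivAt (fun r => (1 + L) * A * r) ((1 + L) * A) r := by
      intro r
      simpa using (hasDerivAt_id r).const_mul ((1 + L) * A)
    intro s hs
    refine image_norm_le_of_norm_deriv_right_le_deriv_boundary
      (f := δp) (f' := fun r => -(δq r) - (F (q₁ r) - F (q₂ r)))
      (fun r _ => (hδp' r).continuousAt.continuousWithinAt)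
      (fun r _ => (hδp' r).hasDerivWithinAt)
      (by rw [hδp0]; simp) hB ?_ hs
    intro r hr
    exact (hbound r).trans (mul_le_mul_of_nonneg_left (hAle r ⟨hr.1, hr.2.le⟩) h1L)
  -- bound on δq - (x-y)
  have hq_bd : ∀ s ∈ Icc (0:ℝ) t, ‖δq s - (x - y)‖ ≤ (1 + L) * A * (s ^ 2 / 2) := by
    have hB : ∀ r : ℝ, HasDerivAt (fun r => (1 + L) * A * (r ^ 2 / 2))
        ((1 + L) * A * r) r := by
      intro r
      have h := ((hasDerivAt_pow 2 r).div_const 2).const_mul ((1 + L) * A)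
      convert h using 1
      exacts [rfl, rfl, by push_cast; ring]
    intro s hs
    refine image_norm_le_of_norm_deriv_right_le_deriv_boundary
      (f := fun r => δq r - (x - y)) (f' := δp)
      (fun r _ => ((hδq' r).continuousAt.continuousWithinAt).sub continuousWithinAt_const)
      (fun r _ => ((hδq' r).sub_const _).hasDerivWithinAt)
      (by show ‖δq 0 - (x - y)‖ ≤ _; rw [hδq0]; simp) hB ?_ hs
    intro r hr
    exact hp_bd r ⟨hr.1, hr.2.le⟩
  -- A ≤ 2‖x-y‖
  have hs₀sq : s₀ ^ 2 ≤ t ^ 2 := by nlinarith [hs₀.1, hs₀.2]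
  have hkey : (1 + L) * s₀ ^ 2 ≤ 1 := by nlinarith
  have hA2 : A ≤ 2 * ‖x - y‖ := by
    have h1 : A - ‖x - y‖ ≤ ‖δq s₀ - (x - y)‖ := by
      have := norm_sub_norm_le (δq s₀) (x - y)
      rw [hAdef]; linarith
    have h2 := hq_bd s₀ hs₀
    have h3 : (1 + L) * A * (s₀ ^ 2 / 2) ≤ A / 2 := by
      nlinarith [mul_le_mul_of_nonneg_left hkey hA0]
    linarith
  have hnormxy : (0:ℝ) ≤ ‖x - y‖ := norm_nonneg _
  constructor
  · intro s hs
    have h1 := hq_bd s hs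
    have hssq : s ^ 2 ≤ t ^ 2 := by nlinarith [hs.1, hs.2]
    have h2 : ((1 + L) * s ^ 2) * A ≤ ((1 + L) * t ^ 2) * (2 * ‖x - y‖) :=
      mul_le_mul (mul_le_mul_of_nonneg_left hssq h1L) hA2 hA0 (mul_nonneg h1L (sq_nonneg t))
    calc ‖δq s - (x - y)‖ ≤ (1 + L) * A * (s ^ 2 / 2) := h1
      _ = (((1 + L) * s ^ 2) * A) / 2 := by ring
      _ ≤ (((1 + L) * t ^ 2) * (2 * ‖x - y‖)) / 2 := by linarith
      _ = t ^ 2 * (1 + L) * ‖x - y‖ := by ring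
  · intro s hs
    have h1 := hp_bd s hs
    have h2 : ((1 + L) * s) * A ≤ ((1 + L) * t) * (2 * ‖x - y‖) :=
      mul_le_mul (mul_le_mul_of_nonneg_left hs.2 h1L) hA2 hA0 (mul_nonneg h1L ht.le)
    calc ‖δp s‖ ≤ (1 + L) * A * s := h1
      _ = ((1 + L) * s) * A := by ring
      _ ≤ ((1 + L) * t) * (2 * ‖x - y‖) := h2
      _ = 2 * t * (1 + L) * ‖x - y‖ := by ring
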